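/- For all integers n ≥ 3 and t ≥ 2, ι(S_{K_n}² | Ex(S_{K_n}²)) = n − 1; that is, the minimum cardinality of a set A ⊆ V(S_{K_n}²) such that every edge of S_{K_n}² has an endpoint in N[A] ∪ Ex(S_{K_n}²) equals n − 1. -/

import Mathlib

/-- The closed neighborhood `N[A]` of a set of vertices. -/
def closedNbhd {V : Type*} (G : SimpleGraph V) (A : Set V) : Set V :=
  {v | v ∈ A ∨ ∃ a ∈ A, G.Adj a v}

/-- A set of vertices is independent if it contains no edge. -/
def IndepSet {V : Type*} (G : SimpleGraph V) (S : Set V) : Prop :=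
  ∀ u ∈ S, ∀ v ∈ S, ¬ G.Adj u v

/-- `A` is isolating if the vertices outside `N[A]` form an independent set. -/
def IsIsolating {V : Type*} (G : SimpleGraph V) (A : Set V) : Prop :=
  IndepSet G (closedNbhd G A)ᶜ

/-- The isolation number `ι(G)`. -/
noncomputable def isolationNum {V : Type*} (G : SimpleGraph V) : ℕ :=
  sInf {n | ∃ A : Set V, IsIsolating G A ∧ A.ncard = n}

/-- `D` is a dominating set if `N[D] = V(G)`. -/
def IsDominating {V : Type*} (G : SimpleGraph V) (D : Set V) : Prop :=
  closedNbhd G D = Set.univ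

/-- The domination number `γ(G)`. -/
noncomputable def dominationNum {V : Type*} (G : SimpleGraph V) : ℕ :=
  sInf {n | ∃ D : Set V, IsDominating G D ∧ D.ncard = n}
/-- The generalized Sierpiński graph `S_G^t` on words of length `t` over `V(G)`. -/
def sierpinskiGraph {V : Type*} (G : SimpleGraph V) (t : ℕ) : SimpleGraph (Fin t → V) where
  Adj u v := ∃ i : Fin t, (∀ j, j < i → u j = v j) ∧ u i ≠ v i ∧ G.Adj (u i) (v i) ∧
      ∀ j, i < j → u j = v i ∧ v j = u i
  symm := by
    constructor
    rintro u v ⟨i, h1, h2, h3, h4⟩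
    exact ⟨i, fun j hj => (h1 j hj).symm, h2.symm, h3.symm,
      fun j hj => ⟨(h4 j hj).2, (h4 j hj).1⟩⟩
  loopless := by
    constructor
    rintro u ⟨i, -, h2, -, -⟩
    exact h2 rfl

/-- The extreme vertices of `S_G^t`: the constant words. -/
def extremeVertices (V : Type*) (t : ℕ) : Set (Fin t → V) :=
  {w | ∃ x : V, w = fun _ => x}
/-- `ι(G|X)`: the minimum size of a set `A` such that the vertices outside
`N[A] ∪ X` form an independent set (vertices of `X` counting as already dominated). -/
noncomputable def isolationNumRel {V : Type*} (G : SimpleGraph V) (X : Set V) : ℕ :=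
  sInf {n | ∃ A : Set V, IndepSet G (closedNbhd G A ∪ X)ᶜ ∧ A.ncard = n}

section Aux

variable {n : ℕ}

/-- The word `(x, b)`. -/
private def vtx {n : ℕ} (x b : Fin n) : Fin 2 → Fin n := ![x, b]

@[simp] private lemma vtx_zero (x b : Fin n) : vtx x b 0 = x := rfl
@[simp] private lemma vtx_one (x b : Fin n) : vtx x b 1 = b := rfl

private lemma eq_vtx (w : Fin 2 → Fin n) : w = vtx (w 0) (w 1) := by
  funext i; fin_cases i <;> rfl

private lemma sierp_adj_iff (u v : Fin 2 → Fin n) :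
    (sierpinskiGraph (⊤ : SimpleGraph (Fin n)) 2).Adj u v ↔
      (u 0 = v 0 ∧ u 1 ≠ v 1) ∨ (u 0 ≠ v 0 ∧ u 1 = v 0 ∧ v 1 = u 0) := by
  constructor
  · rintro ⟨i, h1, h2, h3, h4⟩
    fin_cases i
    · exact Or.inr ⟨h2, (h4 1 (by decide)).1, (h4 1 (by decide)).2⟩
    · exact Or.inl ⟨h1 0 (by decide), h2⟩
  · rintro (⟨h1, h2⟩ | ⟨h1, h2, h3⟩)
    · refine ⟨1, ?_, h2, by simpa using h2, ?_⟩
      · intro j hj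
        have : j = 0 := by omega
        subst this; exact h1
      · intro j hj
        exact absurd hj (by omega)
    · refine ⟨0, ?_, h1, by simpa using h1, ?_⟩
      · intro j hj
        exact absurd hj (by omega)
      · intro j hj
        have : j = 1 := by omega
        subst this; exact ⟨h2, h3⟩

private lemma not_extreme (x b : Fin n) (h : x ≠ b) :
    vtx b x ∉ extremeVertices (Fin n) 2 := by
  rintro ⟨c, hc⟩
  apply h
  have h0 : vtx b x 0 = c := by rw [hc]
  have h1 : vtx b x 1 = c := by rw [hc]
  simp at h0 h1
  rw [h0, h1]

end Aux

theorem isolationRel_sierpinski_two_completeGraph (n t : ℕ) (hn : 3 ≤ n) (ht : 2 ≤ t) :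
    isolationNumRel (sierpinskiGraph (⊤ : SimpleGraph (Fin n)) 2)
      (extremeVertices (Fin n) 2) = n - 1 := by
  set G := sierpinskiGraph (⊤ : SimpleGraph (Fin n)) 2 with hG
  have hnpos : 0 < n := by omega
  set z : Fin n := ⟨0, hnpos⟩ with hz
  -- Upper bound witness
  have hmem : (n - 1) ∈ {m | ∃ A : Set (Fin 2 → Fin n),
      IndepSet G (closedNbhd G A ∪ extremeVertices (Fin n) 2)ᶜ ∧ A.ncard = m} := by
    refine ⟨(fun x => vtx x z) '' {x : Fin n | x ≠ z}, ?_, ?_⟩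
    · -- every vertex is dominated or extreme
      have hall : ∀ w : Fin 2 → Fin n,
          w ∈ closedNbhd G ((fun x => vtx x z) '' {x : Fin n | x ≠ z})
            ∪ extremeVertices (Fin n) 2 := by
        intro w
        by_cases h0 : w 0 = z
        · by_cases h1 : w 1 = z
          · refine Or.inr ⟨z, ?_⟩
            funext i; fin_cases i
            · exact h0
            · exact h1
          · refine Or.inl (Or.inr ⟨vtx (w 1) z, ⟨w 1, h1, rfl⟩, ?_⟩)
            rw [sierp_adj_iff]
            exact Or.inr ⟨by simpa [h0] using h1, by simp [h0], by simp⟩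
        · by_cases h1 : w 1 = z
          · refine Or.inl (Or.inl ⟨w 0, h0, ?_⟩)
            show vtx (w 0) z = w
            rw [← h1]; exact (eq_vtx w).symm
          · refine Or.inl (Or.inr ⟨vtx (w 0) z, ⟨w 0, h0, rfl⟩, ?_⟩)
            rw [sierp_adj_iff]
            exact Or.inl ⟨by simp, by simpa using Ne.symm h1⟩
      intro u hu
      exact absurd (hall u) hu
    · rw [Set.ncard_image_of_injective _ (fun a b hab => by
        have := congrArg (fun f => f 0) hab; simpa using this)]
      have hc : ({x : Fin n | x ≠ z}) = ({z} : Set (Fin n))ᶜ := by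
        ext x; simp
      rw [hc]
      have := Set.ncard_add_ncard_compl ({z} : Set (Fin n))
      rw [Set.ncard_singleton, Nat.card_eq_fintype_card, Fintype.card_fin] at this
      omega
  refine le_antisymm (Nat.sInf_le hmem) (le_csInf ⟨n - 1, hmem⟩ ?_)
  rintro m ⟨A, hA, rfl⟩
  by_contra hlt
  push_neg at hlt
  have hk : A.ncard ≤ n - 2 := by omega
  -- blocks used by A
  set Bc := (fun w : Fin 2 → Fin n => w 0) '' A with hBc
  have hBcard : Bc.ncard ≤ A.ncard := Set.ncard_image_le
  have hcompl : Bc.ncard + Bcᶜ.ncard = n := by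
    have := Set.ncard_add_ncard_compl Bc
    rwa [Nat.card_eq_fintype_card, Fintype.card_fin] at this
  have h2le : 1 < Bcᶜ.ncard := by omega
  rw [Set.one_lt_ncard_iff] at h2le
  obtain ⟨b1, b2, hb1, hb2, hne⟩ := h2le
  -- per-block bound
  have key : ∀ b : Fin n, b ∉ Bc → n - 2 ≤ (A ∩ {w | w 1 = b}).ncard := by
    intro b hb
    have hbfree : ∀ w ∈ A, w 0 ≠ b := by
      intro w hw hwb
      exact hb ⟨w, hw, hwb⟩
    -- undominated set in block b is subsingleton
    set Sb := {x : Fin n | x ≠ b ∧ vtx b x ∉ closedNbhd G A} with hSb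
    have hsub : Sb.ncard ≤ 1 := by
      rw [Set.ncard_le_one_iff]
      intro x y hx hy
      by_contra hxy
      have hux : vtx b x ∈ (closedNbhd G A ∪ extremeVertices (Fin n) 2)ᶜ := by
        intro hc
        rcases hc with hc | hc
        · exact hx.2 hc
        · exact not_extreme x b hx.1 hc
      have huy : vtx b y ∈ (closedNbhd G A ∪ extremeVertices (Fin n) 2)ᶜ := by
        intro hc
        rcases hc with hc | hc
        · exact hy.2 hc
        · exact not_extreme y b hy.1 hc
      refine hA _ hux _ huy ?_
      rw [sierp_adj_iff]
      exact Or.inl ⟨rfl, by simpa using hxy⟩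
    -- the rest of block b is cross-dominated
    have htsub : (fun x => vtx x b) '' ({x : Fin n | x ≠ b} \ Sb) ⊆ A ∩ {w | w 1 = b} := by
      rintro _ ⟨x, ⟨hxb, hxS⟩, rfl⟩
      have hdom : vtx b x ∈ closedNbhd G A := by
        by_contra hnd
        exact hxS ⟨hxb, hnd⟩
      rcases hdom with hdom | ⟨a, ha, hadj⟩
      · exact absurd (by simp : vtx b x 0 = b) (hbfree _ hdom)
      · rw [sierp_adj_iff] at hadj
        rcases hadj with ⟨h1, _⟩ | ⟨h1, h2, h3⟩
        · exact absurd (by simpa using h1) (hbfree _ ha)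
        · have heq : a = vtx x b := by
            funext i; fin_cases i
            · simpa using h3.symm
            · simpa using h2
          refine ⟨?_, rfl⟩
          show vtx x b ∈ A
          exact heq ▸ ha
    have hinj : Set.InjOn (fun x => vtx x b) ({x : Fin n | x ≠ b} \ Sb) := by
      intro a _ c _ hac
      have := congrArg (fun f => f 0) hac
      simpa using this
    have hcard1 : ({x : Fin n | x ≠ b} \ Sb).ncard ≤ (A ∩ {w | w 1 = b}).ncard := by
      rw [← Set.ncard_image_of_injOn hinj]
      exact Set.ncard_le_ncard htsub (Set.toFinite _)
    have hcard2 : n - 1 ≤ ({x : Fin n | x ≠ b} \ Sb).ncard + 1 := by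
      have hSsub : Sb ⊆ {x : Fin n | x ≠ b} := fun x hx => hx.1
      have hd := Set.ncard_diff hSsub (Set.toFinite _)
      have hbig : ({x : Fin n | x ≠ b}).ncard = n - 1 := by
        have hc : ({x : Fin n | x ≠ b}) = ({b} : Set (Fin n))ᶜ := by ext x; simp
        have h2 := Set.ncard_add_ncard_compl ({b} : Set (Fin n))
        rw [Set.ncard_singleton, Nat.card_eq_fintype_card, Fintype.card_fin] at h2
        rw [hc]; clear * - h2 hn; omega
      revert hd hbig hsub
      generalize ({x : Fin n | x ≠ b} \ Sb).ncard = p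
      generalize ({x : Fin n | x ≠ b}).ncard = q
      generalize Sb.ncard = r
      intro hd hbig hsub
      clear * - hd hbig hsub hn
      omega
    refine le_trans ?_ hcard1
    revert hcard2
    generalize ({x : Fin n | x ≠ b} \ Sb).ncard = p
    intro h
    clear * - h hn
    omega
  have h1 := key b1 hb1
  have h2 := key b2 hb2
  have hdisj : Disjoint (A ∩ {w | w 1 = b1}) (A ∩ {w | w 1 = b2}) := by
    rw [Set.disjoint_left]
    rintro w ⟨_, hw1⟩ ⟨_, hw2⟩
    exact hne (hw1 ▸ hw2 ▸ rfl)
  have hsum : (A ∩ {w | w 1 = b1}).ncard + (A ∩ {w | w 1 = b2}).ncard ≤ A.ncard := by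
    rw [← Set.ncard_union_eq hdisj (Set.toFinite _) (Set.toFinite _)]
    exact Set.ncard_le_ncard (Set.union_subset Set.inter_subset_left Set.inter_subset_left)
      (Set.toFinite _)
  have hfin : (n - 2) + (n - 2) ≤ n - 2 :=
    le_trans (add_le_add h1 h2) (le_trans hsum hk)
  clear * - hfin hn
  omega
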